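/- For every k > 0 there exists a constant C(k) > 0 such that for every continuously differentiable u : ℝ → ℝ and every continuously differentiable φ : ℝ → ℝ with support contained in the open interval (−k, k): |∫_{−k}^{k} u(x) u'(x) φ(x) dx| ≤ C(k) (∫_{−k}^{k} u² dx)^{3/4} (∫_{−k}^{k} u² dx + ∫_{−k}^{k} (u')² dx)^{1/4} (∫_{−k}^{k} φ² dx + ∫_{−k}^{k} (φ')² dx)^{1/2}. -/

import Mathlib

open MeasureTheory Set intervalIntegral Real

private lemma cs_sq {a b : ℝ} (hab : a ≤ b) {f g : ℝ → ℝ}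
    (hf : Continuous f) (hg : Continuous g) :
    (∫ x in a..b, f x * g x)^2 ≤ (∫ x in a..b, f x^2) * (∫ x in a..b, g x^2) := by
  set F := ∫ x in a..b, f x^2 with hF
  set G := ∫ x in a..b, g x^2 with hG
  set P := ∫ x in a..b, f x * g x with hP
  have hif : IntervalIntegrable (fun x => f x^2) volume a b :=
    (hf.pow 2).intervalIntegrable a b
  have hig : IntervalIntegrable (fun x => g x^2) volume a b :=
    (hg.pow 2).intervalIntegrable a b
  have hifg : IntervalIntegrable (fun x => f x * g x) volume a b :=
    (hf.mul hg).intervalIntegrable a b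
  have hFnn : 0 ≤ F := intervalIntegral.integral_nonneg hab fun x _ => sq_nonneg _
  have hGnn : 0 ≤ G := intervalIntegral.integral_nonneg hab fun x _ => sq_nonneg _
  have key : ∀ t : ℝ, 0 ≤ t^2 * F + 2*t*P + G := by
    intro t
    have h1 : 0 ≤ ∫ x in a..b, (t * f x + g x)^2 :=
      intervalIntegral.integral_nonneg hab fun x _ => sq_nonneg _
    have h2 : (∫ x in a..b, (t * f x + g x)^2)
        = t^2 * F + 2*t*P + G := by
      have he : ∀ x, (t * f x + g x)^2
          = t^2 * f x^2 + (2*t) * (f x * g x) + g x^2 := fun x => by ring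
      simp_rw [he]
      rw [intervalIntegral.integral_add ((hif.const_mul _).add (hifg.const_mul _)) hig,
        intervalIntegral.integral_add (hif.const_mul _) (hifg.const_mul _),
        intervalIntegral.integral_const_mul, intervalIntegral.integral_const_mul]
    linarith [h2 ▸ h1]
  rcases eq_or_lt_of_le hFnn with h0 | hFpos
  · have hP0 : P = 0 := by
      by_contra hPne
      have ht := key (-(G+1)/(2*P))
      rw [← h0] at ht
      have : (-(G+1)/(2*P))^2 * 0 + 2*(-(G+1)/(2*P))*P + G = -1 := by
        field_simp
        ring
      rw [this] at ht; linarith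
    rw [hP0, ← h0]; nlinarith
  · have ht := key (-(P/F))
    have he : (-(P/F))^2 * F + 2*(-(P/F))*P + G = G - P^2/F := by
      field_simp; ring
    rw [he] at ht
    have : P^2/F ≤ G := by linarith
    calc P^2 = P^2/F * F := by field_simp
      _ ≤ G * F := mul_le_mul_of_nonneg_right this hFnn
      _ = F * G := mul_comm _ _

theorem stmt_9 :
    ∀ k > (0:ℝ), ∃ C > (0:ℝ),
      ∀ u φ : ℝ → ℝ, ContDiff ℝ 1 u → ContDiff ℝ 1 φ →
        Function.support φ ⊆ Set.Ioo (-k) k →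
        |∫ x in (-k)..k, u x * deriv u x * φ x| ≤
          C * (∫ x in (-k)..k, (u x)^2) ^ ((3:ℝ)/4)
            * ((∫ x in (-k)..k, (u x)^2) + ∫ x in (-k)..k, (deriv u x)^2) ^ ((1:ℝ)/4)
            * ((∫ x in (-k)..k, (φ x)^2) + ∫ x in (-k)..k, (deriv φ x)^2) ^ ((1:ℝ)/2) := by
  intro k hk
  set c : ℝ := 1/(2*k) + 2 with hc
  have hcpos : 0 < c := by positivity
  refine ⟨Real.sqrt c, Real.sqrt_pos.mpr hcpos, ?_⟩
  intro u φ hu hφ hsupp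
  have hk' : (-k : ℝ) ≤ k := by linarith
  have hcu : Continuous u := hu.continuous
  have hcφ : Continuous φ := hφ.continuous
  have hcdu : Continuous (deriv u) := hu.continuous_deriv le_rfl
  have hcdφ : Continuous (deriv φ) := hφ.continuous_deriv le_rfl
  set A := ∫ x in (-k)..k, (u x)^2 with hA
  set B := ∫ x in (-k)..k, (deriv u x)^2 with hB
  set E := ∫ x in (-k)..k, (deriv φ x)^2 with hE
  set Fφ := ∫ x in (-k)..k, (φ x)^2 with hFφ
  have hAnn : 0 ≤ A := intervalIntegral.integral_nonneg hk' fun x _ => sq_nonneg _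
  have hBnn : 0 ≤ B := intervalIntegral.integral_nonneg hk' fun x _ => sq_nonneg _
  have hEnn : 0 ≤ E := intervalIntegral.integral_nonneg hk' fun x _ => sq_nonneg _
  have hFφnn : 0 ≤ Fφ := intervalIntegral.integral_nonneg hk' fun x _ => sq_nonneg _
  -- endpoint values of φ
  have hφk : φ k = 0 := by
    by_contra h
    have := hsupp (Function.mem_support.mpr h)
    exact absurd this.2 (lt_irrefl k)
  have hφmk : φ (-k) = 0 := by
    by_contra h
    have := hsupp (Function.mem_support.mpr h)
    exact absurd this.1 (lt_irrefl (-k))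
  -- Integration by parts
  have hder : ∀ x ∈ uIcc (-k) k,
      HasDerivAt (fun y => u y^2 * φ y / 2)
        (u x * deriv u x * φ x + u x^2 * deriv φ x / 2) x := by
    intro x _
    have h1 : HasDerivAt u (deriv u x) x := (hu.differentiable one_ne_zero x).hasDerivAt
    have h2 : HasDerivAt φ (deriv φ x) x := (hφ.differentiable one_ne_zero x).hasDerivAt
    have H : HasDerivAt (fun y => u y^2 * φ y / 2)
        (((2:ℕ) * u x ^ (2 - 1) * deriv u x * φ x + u x ^ 2 * deriv φ x) / 2) x :=
      ((h1.fun_pow 2).fun_mul h2).div_const 2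
    convert H using 1
    norm_num
    ring
  have hcint : Continuous (fun x => u x * deriv u x * φ x + u x^2 * deriv φ x / 2) :=
    ((hcu.mul hcdu).mul hcφ).add (((hcu.pow 2).mul hcdφ).div_const 2)
  have hibp : (∫ x in (-k)..k, (u x * deriv u x * φ x + u x^2 * deriv φ x / 2)) = 0 := by
    rw [intervalIntegral.integral_eq_sub_of_hasDerivAt hder (hcint.intervalIntegrable _ _)]
    simp [hφk, hφmk]
  have hi1 : IntervalIntegrable (fun x => u x * deriv u x * φ x) volume (-k) k :=
    ((hcu.mul hcdu).mul hcφ).intervalIntegrable _ _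
  have hi2 : IntervalIntegrable (fun x => u x^2 * deriv φ x) volume (-k) k :=
    ((hcu.pow 2).mul hcdφ).intervalIntegrable _ _
  set Q := ∫ x in (-k)..k, u x^2 * deriv φ x with hQ
  have hIeq : (∫ x in (-k)..k, u x * deriv u x * φ x) = -(Q/2) := by
    rw [intervalIntegral.integral_add hi1 (hi2.div_const 2)] at hibp
    rw [intervalIntegral.integral_div] at hibp
    linarith
  -- Cauchy-Schwarz for Q
  have hcsQ : Q^2 ≤ (∫ x in (-k)..k, (u x^2)^2) * E :=
    cs_sq hk' (hcu.pow 2) hcdφ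
  set T4 := ∫ x in (-k)..k, (u x^2)^2 with hT4
  have hT4nn : 0 ≤ T4 := intervalIntegral.integral_nonneg hk' fun x _ => sq_nonneg _
  -- sup bound on u^2
  obtain ⟨y₀, hy₀, hmin⟩ := isCompact_Icc.exists_isMinOn (α := ℝ)
    (Set.nonempty_Icc.mpr hk') ((hcu.pow 2).continuousOn (s := Icc (-k) k))
  have hmA : 2*k*(u y₀)^2 ≤ A := by
    have h1 : (∫ _x in (-k)..k, (u y₀)^2) ≤ A :=
      intervalIntegral.integral_mono_on hk' intervalIntegrable_const
        ((hcu.pow 2).intervalIntegrable _ _) (fun x hx => hmin hx)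
    have h2 : (∫ _x in (-k)..k, (u y₀)^2) = 2*k*(u y₀)^2 := by
      rw [intervalIntegral.integral_const, smul_eq_mul]; ring
    linarith [h1, h2 ▸ h1]
  have hcs2 : (∫ t in (-k)..k, |u t| * |deriv u t|) ≤ Real.sqrt (A*B) := by
    set P2 := ∫ t in (-k)..k, |u t| * |deriv u t| with hP2
    have hnn : 0 ≤ P2 := intervalIntegral.integral_nonneg hk'
      fun x _ => mul_nonneg (abs_nonneg _) (abs_nonneg _)
    have h := cs_sq hk' hcu.abs hcdu.abs
    simp_rw [sq_abs] at h
    calc P2 = Real.sqrt (P2^2) := (Real.sqrt_sq hnn).symm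
      _ ≤ Real.sqrt (A*B) := Real.sqrt_le_sqrt h
  set D := A/(2*k) + 2*Real.sqrt (A*B) with hD
  have hsup : ∀ x ∈ Icc (-k) k, (u x)^2 ≤ D := by
    intro x hx
    have hftc : (u x)^2 = (u y₀)^2 + ∫ t in y₀..x, 2 * u t * deriv u t := by
      have hd : ∀ t ∈ uIcc y₀ x, HasDerivAt (fun s => u s^2) (2 * u t * deriv u t) t := by
        intro t _
        have h1 : HasDerivAt u (deriv u t) t := (hu.differentiable one_ne_zero t).hasDerivAt
        have := h1.fun_pow 2
        simpa [pow_one, mul_comm, mul_assoc] using this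
      have := intervalIntegral.integral_eq_sub_of_hasDerivAt hd
        (((continuous_const.mul hcu).mul hcdu).intervalIntegrable _ _)
      linarith [this]
    have habs : |∫ t in y₀..x, 2 * u t * deriv u t|
        ≤ ∫ t in (-k)..k, |2 * u t * deriv u t| := by
      have hiabs : IntervalIntegrable (fun t => |2 * u t * deriv u t|) volume (-k) k :=
        ((continuous_const.mul hcu).mul hcdu).abs.intervalIntegrable _ _
      have hmono : ∀ {a b : ℝ}, -k ≤ a → a ≤ b → b ≤ k →
          (∫ t in a..b, |2 * u t * deriv u t|) ≤ ∫ t in (-k)..k, |2 * u t * deriv u t| := by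
        intro a b h1 h2 h3
        exact intervalIntegral.integral_mono_interval h1 h2 h3
          (Filter.Eventually.of_forall fun t => abs_nonneg _) hiabs
      rcases le_total y₀ x with h | h
      · calc |∫ t in y₀..x, 2 * u t * deriv u t|
            ≤ ∫ t in y₀..x, |2 * u t * deriv u t| :=
              intervalIntegral.abs_integral_le_integral_abs h
          _ ≤ _ := hmono hy₀.1 h hx.2
      · rw [intervalIntegral.integral_symm, abs_neg]
        calc |∫ t in x..y₀, 2 * u t * deriv u t|
            ≤ ∫ t in x..y₀, |2 * u t * deriv u t| :=
              intervalIntegral.abs_integral_le_integral_abs h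
          _ ≤ _ := hmono hx.1 h hy₀.2
    have h2 : (∫ t in (-k)..k, |2 * u t * deriv u t|)
        = 2 * ∫ t in (-k)..k, |u t| * |deriv u t| := by
      rw [← intervalIntegral.integral_const_mul]
      congr 1; funext t
      rw [abs_mul, abs_mul]
      simp [mul_assoc]
    have hy0A : (u y₀)^2 ≤ A/(2*k) := by
      rw [le_div_iff₀ (by linarith : (0:ℝ) < 2*k)]
      linarith [hmA]
    have : (u x)^2 ≤ (u y₀)^2 + |∫ t in y₀..x, 2 * u t * deriv u t| := by
      rw [hftc]
      have := le_abs_self (∫ t in y₀..x, 2 * u t * deriv u t)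
      linarith
    calc (u x)^2 ≤ (u y₀)^2 + |∫ t in y₀..x, 2 * u t * deriv u t| := this
      _ ≤ A/(2*k) + 2 * Real.sqrt (A*B) := by
          have := habs
          rw [h2] at this
          linarith [hy0A, hcs2]
  -- bound T4
  have hT4le : T4 ≤ D * A := by
    calc T4 ≤ ∫ x in (-k)..k, D * (u x)^2 := by
          refine intervalIntegral.integral_mono_on hk'
            (((hcu.pow 2).pow 2).intervalIntegrable _ _)
            ((continuous_const.mul (hcu.pow 2)).intervalIntegrable _ _) ?_
          intro x hx
          have h1 := hsup x hx
          nlinarith [sq_nonneg (u x)]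
      _ = D * A := intervalIntegral.integral_const_mul _ _
  -- bound D
  have hsA : Real.sqrt A * Real.sqrt A = A := Real.mul_self_sqrt hAnn
  have hsAB : Real.sqrt A ≤ Real.sqrt (A+B) := Real.sqrt_le_sqrt (by linarith)
  have hsBB : Real.sqrt B ≤ Real.sqrt (A+B) := Real.sqrt_le_sqrt (by linarith)
  have hDle : D ≤ c * (Real.sqrt A * Real.sqrt (A+B)) := by
    have hA' : A ≤ Real.sqrt A * Real.sqrt (A+B) := by
      calc A = Real.sqrt A * Real.sqrt A := hsA.symm
        _ ≤ Real.sqrt A * Real.sqrt (A+B) :=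
          mul_le_mul_of_nonneg_left hsAB (Real.sqrt_nonneg _)
    have h1 : A/(2*k) ≤ (1/(2*k)) * (Real.sqrt A * Real.sqrt (A+B)) := by
      rw [div_eq_mul_inv, mul_comm A, one_div]
      exact mul_le_mul_of_nonneg_left hA' (by positivity)
    have h2 : 2 * Real.sqrt (A*B) ≤ 2 * (Real.sqrt A * Real.sqrt (A+B)) := by
      rw [Real.sqrt_mul hAnn]
      exact mul_le_mul_of_nonneg_left
        (mul_le_mul_of_nonneg_left hsBB (Real.sqrt_nonneg _)) (by norm_num)
    rw [hD, hc]
    linarith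
  -- final assembly
  have hQabs : |Q| ≤ Real.sqrt T4 * Real.sqrt E := by
    calc |Q| = Real.sqrt (Q^2) := (Real.sqrt_sq_eq_abs Q).symm
      _ ≤ Real.sqrt (T4 * E) := Real.sqrt_le_sqrt hcsQ
      _ = Real.sqrt T4 * Real.sqrt E := Real.sqrt_mul hT4nn E
  have hT4b : Real.sqrt T4 ≤ Real.sqrt c * (Real.sqrt (Real.sqrt A)
      * Real.sqrt (Real.sqrt (A+B))) * Real.sqrt A := by
    calc Real.sqrt T4 ≤ Real.sqrt (c * (Real.sqrt A * Real.sqrt (A+B)) * A) := by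
          apply Real.sqrt_le_sqrt
          calc T4 ≤ D * A := hT4le
            _ ≤ c * (Real.sqrt A * Real.sqrt (A+B)) * A :=
              mul_le_mul_of_nonneg_right hDle hAnn
      _ = Real.sqrt c * (Real.sqrt (Real.sqrt A) * Real.sqrt (Real.sqrt (A+B)))
          * Real.sqrt A := by
          rw [Real.sqrt_mul (by positivity), Real.sqrt_mul (le_of_lt hcpos),
            Real.sqrt_mul (Real.sqrt_nonneg _)]
  have hEb : Real.sqrt E ≤ Real.sqrt (Fφ + E) := Real.sqrt_le_sqrt (by linarith)
  -- rpow conversions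
  have e14 : ∀ x : ℝ, 0 ≤ x → Real.sqrt (Real.sqrt x) = x ^ ((1:ℝ)/4) := by
    intro x hx
    rw [Real.sqrt_eq_rpow, Real.sqrt_eq_rpow, ← Real.rpow_mul hx]
    norm_num
  have e34 : Real.sqrt (Real.sqrt A) * Real.sqrt A = A ^ ((3:ℝ)/4) := by
    rw [e14 A hAnn, Real.sqrt_eq_rpow,
      show ((3:ℝ)/4) = 1/4 + 1/2 by norm_num, Real.rpow_add' hAnn (by norm_num)]
  rw [hIeq, abs_neg, abs_div, abs_two]
  have hrw : Real.sqrt (Fφ + E) = (Fφ + E) ^ ((1:ℝ)/2) := Real.sqrt_eq_rpow _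
  calc |Q| / 2 ≤ Real.sqrt T4 * Real.sqrt E / 2 := by linarith [hQabs]
    _ ≤ Real.sqrt T4 * Real.sqrt E := by
        have : 0 ≤ Real.sqrt T4 * Real.sqrt E := by positivity
        linarith
    _ ≤ (Real.sqrt c * (Real.sqrt (Real.sqrt A) * Real.sqrt (Real.sqrt (A+B)))
          * Real.sqrt A) * Real.sqrt (Fφ + E) := by
        apply mul_le_mul hT4b hEb (Real.sqrt_nonneg _)
        positivity
    _ = Real.sqrt c * A ^ ((3:ℝ)/4) * (A+B) ^ ((1:ℝ)/4) * (Fφ + E) ^ ((1:ℝ)/2) := by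
        rw [← hrw, ← e34, ← e14 (A+B) (by linarith)]
        ring
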